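/- Let K be an algebraically closed field equipped with a surjective Krull valuation val : K → Γ ∪ {∞}, and let f_1, …, f_k be finitely many nonzero Laurent polynomials in N variables over K. Then for every γ ∈ Γ^N there exists x ∈ (K∖{0})^N such that (val(x_1),…,val(x_N)) = γ and val(f_i(x)) = Tf_i(γ) for all i ∈ {1,…,k}; that is, the valuation of f_i at x equals the value of the tropicalization of f_i at γ. -/

import Mathlib

open Finset Pointwise

/-- The tropical dot product `α·γ = ∑ i, α i • γ i`. -/
noncomputable def tropDot {Γ : Type*} [AddCommGroup Γ] [LinearOrder Γ] [IsOrderedAddMonoid Γ] {N : ℕ}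
    (α : Fin N → ℤ) (γ : Fin N → Γ) : Γ :=
  ∑ i, α i • γ i

/-- The tropicalization of a Laurent polynomial `f` (an element of the group algebra
`K[ℤ^N]`), evaluated at `γ ∈ Γ^N`:  `Tf(γ) = min_{α ∈ E(f)} (val φ_α + α·γ)`,
computed in `Γ ∪ {∞}` (the min over the empty set is `∞`). -/
noncomputable def tropicalize {Γ : Type*} [AddCommGroup Γ] [LinearOrder Γ] [IsOrderedAddMonoid Γ]
    {K : Type*} [Field K] {N : ℕ} (val : K → WithTop Γ)
    (f : AddMonoidAlgebra K (Fin N → ℤ)) (γ : Fin N → Γ) : WithTop Γ :=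
  f.coeff.support.inf fun α => val (f.coeff α) + WithTop.some (tropDot α γ)

/-- `D_γ(Tf)`: the set of exponents of `f` at which the minimum defining `Tf(γ)`
is attained. -/
def tropD {Γ : Type*} [AddCommGroup Γ] [LinearOrder Γ] [IsOrderedAddMonoid Γ] {K : Type*} [Field K] {N : ℕ}
    (val : K → WithTop Γ) (f : AddMonoidAlgebra K (Fin N → ℤ))
    (γ : Fin N → Γ) : Set (Fin N → ℤ) :=
  {α | α ∈ f.coeff.support ∧ tropicalize val f γ = val (f.coeff α) + WithTop.some (tropDot α γ)}

/-- `V(Tf)`: the hypersurface associated to the tropicalization of `f`,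
i.e. the points `γ` where the minimum is attained at least twice. -/
def tropV {Γ : Type*} [AddCommGroup Γ] [LinearOrder Γ] [IsOrderedAddMonoid Γ] {K : Type*} [Field K] {N : ℕ}
    (val : K → WithTop Γ) (f : AddMonoidAlgebra K (Fin N → ℤ)) :
    Set (Fin N → Γ) :=
  {γ | ∃ α β : Fin N → ℤ, α ≠ β ∧ α ∈ tropD val f γ ∧ β ∈ tropD val f γ}

/-- Evaluation of a Laurent polynomial at a point of the torus `(K∖{0})^N`:
`f(x) = ∑_{α ∈ E(f)} φ_α x^α`. -/
noncomputable def lEval {K : Type*} [Field K] {N : ℕ}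
    (f : AddMonoidAlgebra K (Fin N → ℤ)) (x : Fin N → Kˣ) : K :=
  ∑ α ∈ f.coeff.support, f.coeff α * ((∏ i, (x i) ^ (α i) : Kˣ) : K)



section KapLemmas
open Polynomial
variable {Γ : Type*} [AddCommGroup Γ] [LinearOrder Γ] [IsOrderedAddMonoid Γ] {K : Type*} [Field K]
variable (val : K → WithTop Γ)
variable (hval0 : ∀ x : K, val x = ⊤ ↔ x = 0)
variable (hvalmul : ∀ x y : K, val (x * y) = val x + val y)
variable (hvaladd : ∀ x y : K, min (val x) (val y) ≤ val (x + y))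
theorem kap_add_self_eq_zero {a : Γ} (h : a + a = 0) : a = 0 := by
  rcases lt_trichotomy a 0 with hlt | heq | hgt
  · have := add_lt_add hlt hlt
    rw [h, add_zero] at this
    exact absurd this (lt_irrefl 0)
  · exact heq
  · have := add_lt_add hgt hgt
    rw [h, add_zero] at this
    exact absurd this (lt_irrefl 0)

include hval0 hvalmul in
theorem kap_val_one : val (1 : K) = 0 := by
  have h1 : val (1 : K) ≠ ⊤ := by simp [hval0]
  obtain ⟨a, ha⟩ := WithTop.ne_top_iff_exists.1 h1
  have h2 : val (1 : K) = val 1 + val 1 := by rw [← hvalmul]; norm_num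
  rw [← ha] at h2
  have h3 : a = a + a := by exact_mod_cast h2
  have h4 : a + a = a + 0 := by rw [add_zero, ← h3]
  have h5 : a = 0 := (add_left_cancel h4).symm ▸ rfl
  rw [← ha, add_left_cancel h4]; rfl

include hval0 hvalmul in
theorem kap_val_neg_one : val (-1 : K) = 0 := by
  have h1 : val (-1 : K) ≠ ⊤ := by simp [hval0]
  obtain ⟨a, ha⟩ := WithTop.ne_top_iff_exists.1 h1
  have h2 : val ((-1 : K) * (-1)) = val (-1) + val (-1) := hvalmul _ _
  rw [neg_mul_neg, one_mul, kap_val_one val hval0 hvalmul, ← ha] at h2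
  have ha' : a + a = 0 := by exact_mod_cast h2.symm
  rw [← ha, kap_add_self_eq_zero ha']; rfl

include hval0 hvalmul in
theorem kap_val_neg (x : K) : val (-x) = val x := by
  have : val (-x) = val (-1) + val x := by rw [← hvalmul]; ring_nf
  rw [this, kap_val_neg_one val hval0 hvalmul, zero_add]

include hval0 hvalmul hvaladd in
theorem kap_val_add_eq (x y : K) (h : val x < val y) : val (x + y) = val x := by
  refine le_antisymm ?_ ?_
  · by_contra hc
    push_neg at hc
    have h2 := hvaladd (x + y) (-y)
    rw [add_neg_cancel_right, kap_val_neg val hval0 hvalmul] at h2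
    have : val x < min (val (x + y)) (val y) := lt_min hc h
    exact absurd h2 (not_le.2 this)
  · have := hvaladd x y
    rwa [min_eq_left h.le] at this

include hval0 hvaladd in
theorem kap_le_val_sum {ι : Type*} (s : Finset ι) (g : ι → K) (M : WithTop Γ)
    (h : ∀ j ∈ s, M ≤ val (g j)) : M ≤ val (∑ j ∈ s, g j) := by
  classical
  induction s using Finset.cons_induction with
  | empty => simp [(hval0 0).2 rfl]
  | cons a s ha ih =>
    rw [Finset.sum_cons]
    exact le_trans (le_min (h a (by simp)) (ih fun j hj => h j (by simp [hj]))) (hvaladd _ _)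

include hval0 hvaladd in
theorem kap_le_val_msum (s : Multiset K) (M : WithTop Γ)
    (h : ∀ x ∈ s, M ≤ val x) : M ≤ val s.sum := by
  induction s using Multiset.induction with
  | empty => simp [(hval0 0).2 rfl]
  | cons a s ih =>
    rw [Multiset.sum_cons]
    exact le_trans (le_min (h a (by simp)) (ih fun x hx => h x (by simp [hx]))) (hvaladd _ _)

theorem kap_msum_nonpos (s : Multiset (WithTop Γ)) (h : ∀ x ∈ s, x ≤ 0) : s.sum ≤ 0 := by
  induction s using Multiset.induction with
  | empty => simp
  | cons a s ih =>
    rw [Multiset.sum_cons]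
    calc a + s.sum ≤ 0 + 0 := add_le_add (h a (by simp)) (ih fun x hx => h x (by simp [hx]))
    _ = 0 := by simp

include hval0 hvalmul in
theorem kap_val_prod {ι : Type*} (s : Finset ι) (g : ι → K) :
    val (∏ j ∈ s, g j) = ∑ j ∈ s, val (g j) := by
  classical
  induction s using Finset.cons_induction with
  | empty => simpa using kap_val_one val hval0 hvalmul
  | cons a s ha ih => rw [Finset.prod_cons, Finset.sum_cons, hvalmul, ih]

include hval0 hvalmul in
theorem kap_val_mprod (s : Multiset K) : val s.prod = (s.map val).sum := by
  induction s using Multiset.induction with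
  | empty => simpa using kap_val_one val hval0 hvalmul
  | cons a s ih => rw [Multiset.prod_cons, Multiset.map_cons, Multiset.sum_cons, hvalmul, ih]

include hval0 hvaladd in
theorem kap_lt_val_sum {ι : Type*} (s : Finset ι) (g : ι → K) (b : WithTop Γ)
    (hb : b ≠ ⊤) (h : ∀ j ∈ s, b < val (g j)) : b < val (∑ j ∈ s, g j) := by
  classical
  induction s using Finset.cons_induction with
  | empty => simpa [(hval0 0).2 rfl] using lt_top_iff_ne_top.2 hb
  | cons a s ha ih =>
    rw [Finset.sum_cons]
    exact lt_of_lt_of_le (lt_min (h a (by simp)) (ih fun j hj => h j (by simp [hj]))) (hvaladd _ _)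

theorem kap_inf_subset {ι : Type*} (s t : Finset ι) (F : ι → WithTop Γ) (hst : s ⊆ t)
    (h : ∀ d ∈ t, d ∉ s → F d = ⊤) : s.inf F = t.inf F := by
  refine le_antisymm ?_ (Finset.inf_mono hst)
  refine Finset.le_inf fun d hd => ?_
  by_cases hds : d ∈ s
  · exact Finset.inf_le hds
  · rw [h d hd hds]; exact le_top

include hval0 hvalmul in
theorem kap_val_pow_some (a : K) (g : Γ) (ha : val a = WithTop.some g) (n : ℕ) :
    val (a ^ n) = WithTop.some (n • g) := by
  induction n with
  | zero => simpa using kap_val_one val hval0 hvalmul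
  | succ n ih =>
    rw [pow_succ, hvalmul, ih, ha, succ_nsmul]
    rfl

include hval0 hvalmul in
theorem kap_val_inv_some (u : Kˣ) (g : Γ) (hu : val (u : K) = WithTop.some g) :
    val ((u⁻¹ : Kˣ) : K) = WithTop.some (-g) := by
  have h1 : val ((u : K) * ((u⁻¹ : Kˣ) : K)) = 0 := by
    rw [Units.mul_inv]; exact kap_val_one val hval0 hvalmul
  rw [hvalmul, hu] at h1
  have hne : val ((u⁻¹ : Kˣ) : K) ≠ ⊤ := by simp [hval0]
  obtain ⟨b, hb⟩ := WithTop.ne_top_iff_exists.1 hne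
  rw [← hb] at h1 ⊢
  have h2 : g + b = 0 := by exact_mod_cast h1
  rw [eq_neg_of_add_eq_zero_right h2]

include hval0 hvalmul in
theorem kap_val_zpow_some (u : Kˣ) (g : Γ) (hu : val (u : K) = WithTop.some g) (n : ℤ) :
    val ((u ^ n : Kˣ) : K) = WithTop.some (n • g) := by
  cases n with
  | ofNat n =>
    rw [Int.ofNat_eq_coe, zpow_natCast, Units.val_pow_eq_pow_val,
      kap_val_pow_some val hval0 hvalmul _ g hu n, natCast_zsmul]
  | negSucc n =>
    have hp : val ((u ^ (n + 1) : Kˣ) : K) = WithTop.some ((n + 1) • g) := by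
      rw [Units.val_pow_eq_pow_val]
      exact kap_val_pow_some val hval0 hvalmul _ g hu (n + 1)
    have := kap_val_inv_some val hval0 hvalmul (u ^ (n + 1)) ((n + 1) • g) hp
    rw [zpow_negSucc, this, negSucc_zsmul]


include hval0 hvalmul hvaladd in
theorem kap_exists_w [IsAlgClosed K] (s : Finset K) :
    ∃ w : K, val w = 0 ∧ ∀ r ∈ s, val (w - r) = min 0 (val r) := by
  classical
  set sp := s.filter (fun r => 0 ≤ val r) with hsp
  set Q : Polynomial K := X * ∏ r ∈ sp, (X - C r) with hQ
  have hQm : Q.Monic := monic_X.mul (monic_prod_of_monic _ _ fun r _ => monic_X_sub_C r)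
  have hQdeg : Q.natDegree = 1 + sp.card := by
    rw [hQ, Polynomial.Monic.natDegree_mul monic_X
      (monic_prod_of_monic _ _ fun r _ => monic_X_sub_C r), natDegree_X,
      natDegree_prod_of_monic _ _ (fun r _ => monic_X_sub_C r)]
    simp [natDegree_X_sub_C]
  set P : Polynomial K := Q - C 1 with hP
  have hPdeg : P.natDegree = 1 + sp.card := by rw [hP, natDegree_sub_C, hQdeg]
  have hPne : P.degree ≠ 0 := by
    have h1 : P.natDegree ≠ 0 := by omega
    exact fun h => h1 (Polynomial.natDegree_eq_zero_iff_degree_le_zero.2 (le_of_eq h))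
  obtain ⟨w, hw⟩ := IsAlgClosed.exists_root P hPne
  have heq : w * ∏ r ∈ sp, (w - r) = 1 := by
    have := hw
    rw [IsRoot.def, hP, hQ] at this
    simp only [eval_sub, eval_mul, eval_X, eval_C, eval_prod, eval_sub, eval_C, eval_X,
      sub_eq_zero] at this
    exact this
  have hval : val w + ∑ r ∈ sp, val (w - r) = 0 := by
    have h := congrArg val heq
    rw [hvalmul, kap_val_prod val hval0 hvalmul, kap_val_one val hval0 hvalmul] at h
    exact h
  rcases lt_or_ge (val w) 0 with hneg | hpos
  · exfalso
    have hterm : ∀ r ∈ sp, val (w - r) = val w := by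
      intro r hr
      have hr0 : 0 ≤ val r := (Finset.mem_filter.1 hr).2
      have : val w < val (-r) := by rw [kap_val_neg val hval0 hvalmul]; exact lt_of_lt_of_le hneg hr0
      rw [sub_eq_add_neg]; exact kap_val_add_eq val hval0 hvalmul hvaladd w (-r) this
    have hsum : ∑ r ∈ sp, val (w - r) ≤ 0 :=
      Finset.sum_nonpos fun r hr => le_of_lt (by rw [hterm r hr]; exact hneg)
    have : val w + ∑ r ∈ sp, val (w - r) ≤ val w + 0 := add_le_add_right hsum _
    rw [hval, add_zero] at this
    exact absurd this (not_le.2 hneg)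
  · have hterm : ∀ r ∈ sp, 0 ≤ val (w - r) := by
      intro r hr
      have hr0 : 0 ≤ val r := (Finset.mem_filter.1 hr).2
      have := hvaladd w (-r)
      rw [← sub_eq_add_neg, kap_val_neg val hval0 hvalmul] at this
      exact le_trans (le_min hpos hr0) this
    have hsumnn : 0 ≤ ∑ r ∈ sp, val (w - r) := Finset.sum_nonneg hterm
    have hw0 : val w = 0 := by
      have h1 : val w ≤ 0 := by
        calc val w = val w + 0 := (add_zero _).symm
        _ ≤ val w + ∑ r ∈ sp, val (w - r) := add_le_add_right hsumnn _
        _ = 0 := hval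
      exact le_antisymm h1 hpos
    have hsum0 : ∑ r ∈ sp, val (w - r) = 0 := by
      rw [hw0, zero_add] at hval; exact hval
    have heach := (Finset.sum_eq_zero_iff_of_nonneg hterm).1 hsum0
    refine ⟨w, hw0, fun r hr => ?_⟩
    by_cases hrp : 0 ≤ val r
    · have hrs : r ∈ sp := Finset.mem_filter.2 ⟨hr, hrp⟩
      rw [heach r hrs, min_eq_left hrp]
    · push_neg at hrp
      have : val (-r) < val w := by rw [kap_val_neg val hval0 hvalmul, hw0]; exact hrp
      have h2 : val (-r + w) = val (-r) := kap_val_add_eq val hval0 hvalmul hvaladd (-r) w this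
      rw [sub_eq_add_neg, add_comm, h2, kap_val_neg val hval0 hvalmul, min_eq_right hrp.le]


include hval0 hvalmul hvaladd in
theorem kap_val_eval_eq_inf [IsAlgClosed K] (q : Polynomial K) (w : K)
    (hw : val w = 0) (hroots : ∀ r ∈ q.roots, val (w - r) = min 0 (val r)) :
    val (q.eval w) = q.support.inf fun d => val (q.coeff d) := by
  classical
  have hsplits : Splits q := IsAlgClosed.splits q
  have hfact := hsplits.eq_prod_roots
  set S : WithTop Γ := (q.roots.map fun r => min 0 (val r)).sum with hSdef
  have hvw0 : ∀ n : ℕ, val (w ^ n) = 0 := by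
    intro n
    have : val w = WithTop.some (0 : Γ) := hw
    rw [kap_val_pow_some val hval0 hvalmul w 0 this n, smul_zero]; rfl
  have heval : val (q.eval w) = val q.leadingCoeff + S := by
    conv_lhs => rw [hfact]
    rw [eval_mul, eval_C, hvalmul, eval_multiset_prod, Multiset.map_map,
      kap_val_mprod val hval0 hvalmul, Multiset.map_map]
    congr 1
    rw [hSdef]
    apply congrArg
    apply Multiset.map_congr rfl
    intro r hr
    simp only [Function.comp_apply, eval_sub, eval_X, eval_C]
    exact hroots r hr
  refine le_antisymm ?_ ?_
  · -- val(eval) ≤ inf : show val(eval) ≤ val (coeff d) for each d in support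
    refine Finset.le_inf fun d _ => ?_
    have hcoeff : q.coeff d
        = q.leadingCoeff * ((q.roots.map fun a => X - C a).prod.coeff d) := by
      conv_lhs => rw [hfact]
      rw [coeff_C_mul]
    by_cases hcard : d ≤ Multiset.card q.roots
    · rw [Multiset.prod_X_sub_C_coeff _ hcard] at hcoeff
      set j := Multiset.card q.roots - d with hj
      have hneg1 : val ((-1 : K) ^ j) = 0 := by
        have : val (-1 : K) = WithTop.some (0 : Γ) := kap_val_neg_one val hval0 hvalmul
        rw [kap_val_pow_some val hval0 hvalmul _ 0 this j, smul_zero]; rfl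
      have hesymm : S ≤ val (q.roots.esymm j) := by
        rw [Multiset.esymm]
        apply kap_le_val_msum val hval0 hvaladd
        intro x hx
        obtain ⟨S', hS'mem, rfl⟩ := Multiset.mem_map.1 hx
        obtain ⟨hle, _⟩ := Multiset.mem_powersetCard.1 hS'mem
        have h1 : (S'.map fun r => min 0 (val r)).sum ≤ (S'.map val).sum :=
          Multiset.sum_map_le_sum_map _ _ fun r _ => min_le_right _ _
        have h2 : S ≤ (S'.map fun r => min 0 (val r)).sum := by
          obtain ⟨T, hT⟩ := Multiset.le_iff_exists_add.1 hle
          rw [hSdef, hT, Multiset.map_add, Multiset.sum_add]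
          have : (T.map fun r => min 0 (val r)).sum ≤ 0 :=
            kap_msum_nonpos (T.map fun r => min 0 (val r))
              (by intro x hx; obtain ⟨r, _, rfl⟩ := Multiset.mem_map.1 hx; exact min_le_left _ _)
          calc (S'.map fun r => min 0 (val r)).sum + (T.map fun r => min 0 (val r)).sum
              ≤ (S'.map fun r => min 0 (val r)).sum + 0 := add_le_add_right this _
          _ = (S'.map fun r => min 0 (val r)).sum := add_zero _
        calc S ≤ (S'.map fun r => min 0 (val r)).sum := h2
        _ ≤ (S'.map val).sum := h1
        _ = val S'.prod := (kap_val_mprod val hval0 hvalmul S').symm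
      rw [heval, hcoeff, hvalmul, hvalmul, hneg1, zero_add]
      exact add_le_add_right hesymm _
    · push_neg at hcard
      have hdeg : q.natDegree = Multiset.card q.roots := by
        exact hsplits.natDegree_eq_card_roots
      have : q.coeff d = 0 := coeff_eq_zero_of_natDegree_lt (by omega)
      rw [this, (hval0 0).2 rfl]
      exact le_top
  · -- inf ≤ val(eval)
    rw [eval_eq_sum, Polynomial.sum_def]
    apply kap_le_val_sum val hval0 hvaladd
    intro d hd
    rw [hvalmul, hvw0 d, add_zero]
    exact Finset.inf_le hd


theorem kap_exists_sep : ∀ (N : ℕ) (D : Finset (Fin N → ℤ)), (∀ δ ∈ D, δ ≠ 0) →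
    ∃ c : Fin N → ℤ, ∀ δ ∈ D, ∑ j, δ j * c j ≠ 0 := by
  intro N
  induction N with
  | zero =>
    intro D hD
    exact ⟨0, fun δ hδ => absurd (funext fun j => Fin.elim0 j) (hD δ hδ)⟩
  | succ N ih =>
    intro D hD
    classical
    obtain ⟨c', hc'⟩ := ih ((D.filter fun δ => δ (Fin.last N) = 0).image fun δ => δ ∘ Fin.castSucc)
      (by
        intro δ' hδ'
        obtain ⟨δ, hδmem, rfl⟩ := Finset.mem_image.1 hδ'
        obtain ⟨hδD, hlast⟩ := Finset.mem_filter.1 hδmem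
        intro hz
        apply hD δ hδD
        funext j
        refine Fin.lastCases ?_ ?_ j
        · exact hlast
        · intro i; exact congrFun hz i)
    have hAnn : (0:ℤ) ≤ ∑ δ ∈ D, |∑ j : Fin N, δ (Fin.castSucc j) * c' j| :=
      Finset.sum_nonneg fun δ _ => abs_nonneg _
    refine ⟨Fin.snoc c' (1 + ∑ δ ∈ D, |∑ j : Fin N, δ (Fin.castSucc j) * c' j|), fun δ hδ => ?_⟩
    have hsum : ∑ j : Fin (N+1),
          δ j * (Fin.snoc c' (1 + ∑ δ ∈ D, |∑ j : Fin N, δ (Fin.castSucc j) * c' j|) : Fin (N+1) → ℤ) j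
        = (∑ j : Fin N, δ (Fin.castSucc j) * c' j)
          + δ (Fin.last N) * (1 + ∑ δ ∈ D, |∑ j : Fin N, δ (Fin.castSucc j) * c' j|) := by
      rw [Fin.sum_univ_castSucc]
      congr 1
      · exact Finset.sum_congr rfl fun j _ => by rw [Fin.snoc_castSucc]
      · rw [Fin.snoc_last]
    rw [hsum]
    by_cases hlast : δ (Fin.last N) = 0
    · rw [hlast, zero_mul, add_zero]
      exact hc' _ (Finset.mem_image.2 ⟨δ, Finset.mem_filter.2 ⟨hδ, hlast⟩, rfl⟩)
    · intro h0
      have hBle := Finset.single_le_sum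
          (f := fun δ : Fin (N+1) → ℤ => |∑ j : Fin N, δ (Fin.castSucc j) * c' j|)
          (fun δ _ => abs_nonneg _) hδ
      have h4 : (1:ℤ) ≤ |δ (Fin.last N)| := Int.one_le_abs hlast
      have h2 : δ (Fin.last N) * (1 + ∑ δ ∈ D, |∑ j : Fin N, δ (Fin.castSucc j) * c' j|)
          = -(∑ j : Fin N, δ (Fin.castSucc j) * c' j) := by linarith
      have h3 := congrArg abs h2
      rw [abs_neg, abs_mul,
        abs_of_nonneg (by linarith : (0:ℤ) ≤ 1 + ∑ δ ∈ D, |∑ j : Fin N, δ (Fin.castSucc j) * c' j|)] at h3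
      nlinarith [h3, h4, hBle]

end KapLemmas

theorem kap_zpow_sum {G : Type*} [CommGroup G] (a : G) {ι : Type*} (s : Finset ι) (g : ι → ℤ) :
    a ^ (∑ j ∈ s, g j) = ∏ j ∈ s, a ^ g j := by
  classical
  induction s using Finset.cons_induction with
  | empty => simp
  | cons b s hb ih => rw [Finset.sum_cons, Finset.prod_cons, zpow_add, ih]

/-- For every value `γ ∈ Γ^N` there is a point `x` of the torus with `val x = γ` at
which the valuation commutes with evaluation for each of finitely many nonzero Laurent
polynomials:  `val (fᵢ(x)) = Tfᵢ(γ)`. -/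
theorem exists_point_val_eval_eq_tropicalize {Γ : Type*} [AddCommGroup Γ] [LinearOrder Γ] [IsOrderedAddMonoid Γ]
    {K : Type*} [Field K] [IsAlgClosed K] {N k : ℕ}
    (val : K → WithTop Γ)
    (hval0 : ∀ x : K, val x = ⊤ ↔ x = 0)
    (hvalmul : ∀ x y : K, val (x * y) = val x + val y)
    (hvaladd : ∀ x y : K, min (val x) (val y) ≤ val (x + y))
    (hvalsurj : ∀ g : Γ, ∃ a : K, val a = WithTop.some g)
    (f : Fin k → AddMonoidAlgebra K (Fin N → ℤ)) (hf : ∀ i, f i ≠ 0)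
    (γ : Fin N → Γ) :
    ∃ x : Fin N → Kˣ, (∀ j, val (x j : K) = WithTop.some (γ j)) ∧
      ∀ i, val (lEval (f i) x) = tropicalize val (f i) γ := by
  classical
  -- choose t j with val (t j) = γ j
  have ht0 : ∀ j : Fin N, ∃ u : Kˣ, val (u : K) = WithTop.some (γ j) := by
    intro j
    obtain ⟨a, ha⟩ := hvalsurj (γ j)
    have ha0 : a ≠ 0 := by
      intro h
      rw [h, (hval0 0).2 rfl] at ha
      exact (WithTop.top_ne_coe) ha
    exact ⟨Units.mk0 a ha0, ha⟩
  choose t ht using ht0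
  -- the union of all supports
  set E : Finset (Fin N → ℤ) := Finset.univ.biUnion (fun i => (f i).coeff.support) with hE
  have hmemE : ∀ i, ∀ α ∈ (f i).coeff.support, α ∈ E :=
    fun i α hα => Finset.mem_biUnion.2 ⟨i, Finset.mem_univ i, hα⟩
  -- separating vector c
  obtain ⟨c, hc⟩ := kap_exists_sep N (((E ×ˢ E).image fun p => p.1 - p.2).filter (· ≠ 0))
    (fun δ hδ => (Finset.mem_filter.1 hδ).2)
  set I : (Fin N → ℤ) → ℤ := fun α => ∑ j, α j * c j with hI
  have hinj : ∀ α ∈ E, ∀ β ∈ E, I α = I β → α = β := by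
    intro α hα β hβ h
    by_contra hne
    refine hc (α - β) (Finset.mem_filter.2
      ⟨Finset.mem_image.2 ⟨(α, β), Finset.mem_product.2 ⟨hα, hβ⟩, rfl⟩, sub_ne_zero.2 hne⟩) ?_
    have h2 : ∑ j, (α - β) j * c j = I α - I β := by
      rw [hI, ← Finset.sum_sub_distrib]
      exact Finset.sum_congr rfl fun j _ => by simp [sub_mul]
    rw [h2, h, sub_self]
  -- shift
  set m : ℕ := E.sup fun α => (I α).natAbs with hm
  have hmle : ∀ α ∈ E, 0 ≤ I α + m := by
    intro α hα
    have h1 : (I α).natAbs ≤ m := Finset.le_sup (f := fun α => (I α).natAbs) hα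
    omega
  set e : (Fin N → ℤ) → ℕ := fun α => (I α + m).toNat with he
  have hecast : ∀ α ∈ E, (e α : ℤ) = I α + m := fun α hα => Int.toNat_of_nonneg (hmle α hα)
  have heinj : ∀ α ∈ E, ∀ β ∈ E, e α = e β → α = β := by
    intro α hα β hβ h
    apply hinj α hα β hβ
    have h2 := hecast α hα
    have h3 := hecast β hβ
    omega
  -- monomials in t
  set T : (Fin N → ℤ) → Kˣ := fun α => ∏ j, (t j) ^ (α j) with hT
  have hvalT : ∀ α, val (T α : K) = WithTop.some (tropDot α γ) := by
    intro α
    rw [hT]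
    simp only []
    have hcoe : ((∏ j, (t j) ^ (α j) : Kˣ) : K) = ∏ j, (((t j) ^ (α j) : Kˣ) : K) :=
      map_prod (Units.coeHom K) (fun j => (t j) ^ (α j)) Finset.univ
    rw [hcoe, kap_val_prod val hval0 hvalmul]
    have h1 : ∀ j, val (((t j ^ (α j) : Kˣ)) : K) = WithTop.some (α j • γ j) :=
      fun j => kap_val_zpow_some val hval0 hvalmul (t j) (γ j) (ht j) (α j)
    rw [Finset.sum_congr rfl fun j _ => h1 j]
    rw [tropDot, ← WithTop.coe_sum]
    try rfl
  -- the one-variable polynomials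
  set q : Fin k → Polynomial K :=
    fun i => ∑ α ∈ (f i).coeff.support, Polynomial.C ((f i).coeff α * (T α : K)) * Polynomial.X ^ (e α)
      with hq
  have hcoeff : ∀ i, ∀ α ∈ (f i).coeff.support, (q i).coeff (e α) = (f i).coeff α * (T α : K) := by
    intro i α hα
    rw [hq]
    simp only []
    rw [Polynomial.finset_sum_coeff]
    rw [Finset.sum_eq_single α]
    · simp [mul_assoc, Polynomial.coeff_C_mul, Polynomial.coeff_X_pow]
    · intro β hβ hne
      have hne' : e α ≠ e β := fun h => hne (heinj β (hmemE i β hβ) α (hmemE i α hα) h.symm)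
      simp [mul_assoc, Polynomial.coeff_C_mul, Polynomial.coeff_X_pow, hne']
    · intro h; exact absurd hα h
  have hcoeff0 : ∀ i, ∀ d, d ∉ ((f i).coeff.support.image e) → (q i).coeff d = 0 := by
    intro i d hd
    rw [hq]
    simp only []
    rw [Polynomial.finset_sum_coeff]
    apply Finset.sum_eq_zero
    intro β hβ
    have hne : d ≠ e β := fun h => hd (Finset.mem_image.2 ⟨β, hβ, h.symm⟩)
    simp [mul_assoc, Polynomial.coeff_C_mul, Polynomial.coeff_X_pow, hne]
  have hsupp : ∀ i, (q i).support ⊆ (f i).coeff.support.image e := by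
    intro i d hd
    by_contra h
    exact (Polynomial.mem_support_iff.1 hd) (hcoeff0 i d h)
  -- the point w
  obtain ⟨w, hw0, hwr⟩ := kap_exists_w val hval0 hvalmul hvaladd
    (Finset.univ.biUnion fun i : Fin k => (q i).roots.toFinset)
  have hwne : w ≠ 0 := by
    intro h
    rw [h, (hval0 0).2 rfl] at hw0
    exact WithTop.top_ne_coe hw0
  set wu : Kˣ := Units.mk0 w hwne with hwu
  have hwu0 : val ((wu : Kˣ) : K) = WithTop.some (0 : Γ) := hw0
  -- the point x
  set x : Fin N → Kˣ := fun j => t j * wu ^ (c j) with hx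
  have hxj : ∀ j, val (x j : K) = WithTop.some (γ j) := by
    intro j
    rw [hx]
    simp only []
    rw [Units.val_mul, hvalmul, ht j,
      kap_val_zpow_some val hval0 hvalmul wu 0 hwu0 (c j), smul_zero]
    rw [← WithTop.coe_add, add_zero]
  refine ⟨x, hxj, fun i => ?_⟩
  -- rewrite lEval as polynomial evaluation
  have hx_mono : ∀ α ∈ (f i).coeff.support,
      ((∏ j, (x j) ^ (α j) : Kˣ) : K) = (T α : K) * w ^ (e α) * ((wu ^ (-(m:ℤ)) : Kˣ) : K) := by
    intro α hα
    have hαE : α ∈ E := hmemE i α hα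
    have h1 : (∏ j, (x j) ^ (α j) : Kˣ) = T α * wu ^ (I α) := by
      rw [hx, hT, hI]
      simp only []
      calc ∏ j, (t j * wu ^ (c j)) ^ (α j)
          = ∏ j, ((t j) ^ (α j) * wu ^ (c j * α j)) := by
            refine Finset.prod_congr rfl fun j _ => ?_
            rw [mul_zpow, ← zpow_mul]
        _ = (∏ j, (t j) ^ (α j)) * ∏ j, wu ^ (c j * α j) := Finset.prod_mul_distrib
        _ = (∏ j, (t j) ^ (α j)) * wu ^ (∑ j, α j * c j) := by
            rw [kap_zpow_sum wu Finset.univ (fun j => α j * c j)]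
            congr 1
            exact Finset.prod_congr rfl fun j _ => by rw [mul_comm (c j) (α j)]
    have h2 : wu ^ (I α) = wu ^ ((e α : ℤ)) * wu ^ (-(m:ℤ)) := by
      rw [← zpow_add, hecast α hαE]
      congr 1
      omega
    rw [h1, h2, ← mul_assoc, Units.val_mul, Units.val_mul]
    congr 1
    try rw [zpow_natCast, Units.val_pow_eq_pow_val]
    try rfl
  have hlEval : lEval (f i) x = (q i).eval w * ((wu ^ (-(m:ℤ)) : Kˣ) : K) := by
    rw [lEval, hq]
    simp only []
    rw [Polynomial.eval_finset_sum, Finset.sum_mul]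
    refine Finset.sum_congr rfl fun α hα => ?_
    rw [hx_mono α hα, Polynomial.eval_mul, Polynomial.eval_C, Polynomial.eval_pow,
      Polynomial.eval_X]
    ring
  have hroots : ∀ r ∈ (q i).roots, val (w - r) = min 0 (val r) := fun r hr =>
    hwr r (Finset.mem_biUnion.2 ⟨i, Finset.mem_univ i, Multiset.mem_toFinset.2 hr⟩)
  rw [hlEval, hvalmul, kap_val_zpow_some val hval0 hvalmul wu 0 hwu0 (-(m:ℤ)), smul_zero]
  rw [show ((0:Γ) : WithTop Γ) = (0 : WithTop Γ) from rfl, add_zero]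
  rw [kap_val_eval_eq_inf val hval0 hvalmul hvaladd (q i) w hw0 hroots]
  rw [kap_inf_subset ((q i).support) ((f i).coeff.support.image e) _ (hsupp i)
    (fun d _ hds => (hval0 _).2 (Polynomial.notMem_support_iff.1 hds))]
  rw [Finset.inf_image]
  rw [tropicalize]
  refine Finset.inf_congr rfl fun α hα => ?_
  show val ((q i).coeff (e α)) = val ((f i).coeff α) + WithTop.some (tropDot α γ)
  rw [hcoeff i α hα, hvalmul, hvalT α]
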